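/- Let k ≥ 2 be an integer. For every real number c < k − 1 and every real number b there exists a finite-dimensional k-round F-algebra A such that l(A) > c·dim A + b. Hence k − 1 is the minimal u-velocity of the class of k-round algebras. -/

import Mathlib

namespace P

/-- The list of leaves (letters) of a nonassociative word, in order. -/
def leafList {α : Type*} : FreeMagma α → List α
  | .of a => [a]
  | .mul x y => leafList x ++ leafList y

/-- The length of a nonassociative word: the number of factors. -/
def wlen {α : Type*} (w : FreeMagma α) : ℕ := (leafList w).length

/-- Evaluation of a formal word with letters in a magma `A`. -/
def evalA {A : Type*} [Mul A] (w : FreeMagma A) : A :=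
  FreeMagma.lift (id : A → A) w

/-- Evaluation of a formal word in variables `Fin n` under an assignment `v`. -/
def evalVar {A : Type*} [Mul A] {n : ℕ} (v : Fin n → A) (w : FreeMagma (Fin n)) : A :=
  FreeMagma.lift v w

/-- `w` is a word in the set `S`: all its letters belong to `S`. -/
def HasLeavesIn {A : Type*} (S : Set A) (w : FreeMagma A) : Prop :=
  ∀ a ∈ leafList w, a ∈ S

/-- `L_i(S)`: the span of all values of words in `S` of length at most `i`.
For `i = 0` this is `0`, since every word has length at least 1. -/
def Lspan (F : Type*) {A : Type*} [Field F] [NonUnitalNonAssocRing A] [Module F A]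
    (S : Set A) (i : ℕ) : Submodule F A :=
  Submodule.span F { a | ∃ w : FreeMagma A, HasLeavesIn S w ∧ wlen w ≤ i ∧ evalA w = a }

/-- `S` is a generating set of the algebra `A`. -/
def Generates (F : Type*) {A : Type*} [Field F] [NonUnitalNonAssocRing A] [Module F A]
    (S : Set A) : Prop :=
  Submodule.span F { a | ∃ w : FreeMagma A, HasLeavesIn S w ∧ evalA w = a } = ⊤

/-- The length `l(S)` of a generating set: the least `k` with `L_k(S) = A`. -/
noncomputable def lenS (F : Type*) {A : Type*} [Field F] [NonUnitalNonAssocRing A] [Module F A]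
    (S : Set A) : ℕ :=
  sInf { k | Lspan F S k = ⊤ }

/-- The characteristic sequence of a generating set `S`, as a predicate on a
nondecreasing sequence `m : Fin d → ℕ`. -/
def IsCharSeq (F : Type*) {A : Type*} [Field F] [NonUnitalNonAssocRing A] [Module F A]
    (S : Set A) {d : ℕ} (m : Fin d → ℕ) : Prop :=
  Monotone m ∧ (∀ j, 1 ≤ m j) ∧
    ∀ t : ℕ, 1 ≤ t →
      (Finset.univ.filter fun j => m j = t).card =
        Module.finrank F (Lspan F S t) - Module.finrank F (Lspan F S (t - 1))

/-- `w` is a multilinear word using each variable of `T` exactly once. -/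
def IsMultilinearOn {n : ℕ} (T : Finset (Fin n)) (w : FreeMagma (Fin n)) : Prop :=
  (leafList w : Multiset (Fin n)) = T.val

/-- Membership in `D_0(z_0,…,z_k)`: multilinear words in `z_0,…,z_k` except those of
length `k+1` in which `z_0` is a factor of the last multiplication. -/
def InD0 {k : ℕ} (w : FreeMagma (Fin (k + 1))) : Prop :=
  (leafList w : Multiset (Fin (k + 1))).Nodup ∧
    ¬∃ u : FreeMagma (Fin (k + 1)),
        IsMultilinearOn (Finset.univ.erase 0) u ∧
          (w = FreeMagma.of 0 * u ∨ w = u * FreeMagma.of 0)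

/-- Membership in `D_l(z_0,…,z_k)`: multilinear words in `z_0,…,z_k` except those of
length `k+1` in which `z_0` occurs in the first factor of the last multiplication. -/
def InDl {k : ℕ} (w : FreeMagma (Fin (k + 1))) : Prop :=
  (leafList w : Multiset (Fin (k + 1))).Nodup ∧
    ¬((leafList w : Multiset (Fin (k + 1))) = (Finset.univ : Finset (Fin (k + 1))).val ∧
      ∃ w1 w2 : FreeMagma (Fin (k + 1)), w = w1 * w2 ∧ (0 : Fin (k + 1)) ∈ leafList w1)

/-- Membership in `D_r(z_0,…,z_k)`: multilinear words in `z_0,…,z_k` except those of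
length `k+1` in which `z_0` occurs in the second factor of the last multiplication. -/
def InDr {k : ℕ} (w : FreeMagma (Fin (k + 1))) : Prop :=
  (leafList w : Multiset (Fin (k + 1))).Nodup ∧
    ¬((leafList w : Multiset (Fin (k + 1))) = (Finset.univ : Finset (Fin (k + 1))).val ∧
      ∃ w1 w2 : FreeMagma (Fin (k + 1)), w = w1 * w2 ∧ (0 : Fin (k + 1)) ∈ leafList w2)

/-- The algebra `A` is `k`-mixing. -/
def IsKMixing (F A : Type*) [Field F] [NonUnitalNonAssocRing A] [Module F A] (k : ℕ) : Prop :=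
  ∀ (x : A) (y : Fin k → A) (w : FreeMagma (Fin (k + 1))),
    (∃ u, IsMultilinearOn (Finset.univ.erase 0) u ∧
        (w = FreeMagma.of 0 * u ∨ w = u * FreeMagma.of 0)) →
      evalVar (Fin.cons x y) w ∈
        Submodule.span F
          { a | ∃ z : FreeMagma (Fin (k + 1)), InD0 z ∧ evalVar (Fin.cons x y) z = a }

/-- The algebra `A` is `k`-sliding. -/
def IsKSliding (F A : Type*) [Field F] [NonUnitalNonAssocRing A] [Module F A] (k : ℕ) : Prop :=
  (∀ (x : A) (y : Fin k → A) (u : FreeMagma (Fin (k + 1))),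
      IsMultilinearOn (Finset.univ.erase 0) u →
        evalVar (Fin.cons x y) (u * FreeMagma.of 0) ∈
          Submodule.span F
            { a | ∃ z : FreeMagma (Fin (k + 1)), InDl z ∧ evalVar (Fin.cons x y) z = a }) ∨
  (∀ (x : A) (y : Fin k → A) (u : FreeMagma (Fin (k + 1))),
      IsMultilinearOn (Finset.univ.erase 0) u →
        evalVar (Fin.cons x y) (FreeMagma.of 0 * u) ∈
          Submodule.span F
            { a | ∃ z : FreeMagma (Fin (k + 1)), InDr z ∧ evalVar (Fin.cons x y) z = a })

/-- `u` is a subword of `w`. -/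
inductive IsSubword {A : Type*} : FreeMagma A → FreeMagma A → Prop
  | refl (w : FreeMagma A) : IsSubword w w
  | left {s u : FreeMagma A} (v : FreeMagma A) : IsSubword s u → IsSubword s (u * v)
  | right (u : FreeMagma A) {s v : FreeMagma A} : IsSubword s v → IsSubword s (u * v)

/-- `IsSprout w L`: `L` is a sprout sequence of the word `w` (with the convention that
words of length 1 have the empty sprout sequence). -/
inductive IsSprout {A : Type*} : FreeMagma A → List (FreeMagma A) → Prop
  | single (a : A) : IsSprout (FreeMagma.of a) []
  | cons_l {u v : FreeMagma A} {L : List (FreeMagma A)} :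
      wlen u ≤ wlen v → IsSprout v L → IsSprout (u * v) (u :: L)
  | cons_r {u v : FreeMagma A} {L : List (FreeMagma A)} :
      wlen v ≤ wlen u → IsSprout u L → IsSprout (u * v) (v :: L)

/-- A word is `k`-bounded if it has length 1 or admits an `l`-sprout sequence all of whose
terms are strictly less than `k`. -/
def KBounded {A : Type*} (k : ℕ) (w : FreeMagma A) : Prop :=
  ∃ L : List (FreeMagma A), IsSprout w L ∧ ∀ u ∈ L, wlen u < k

/-- A word `w` in `S` is irreducible if it does not lie in `L_m(S)` for any `m < l(w)`. -/
def Irred (F : Type*) {A : Type*} [Field F] [NonUnitalNonAssocRing A] [Module F A]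
    (S : Set A) (w : FreeMagma A) : Prop :=
  ∀ m : ℕ, m < wlen w → evalA w ∉ Lspan F S m

/-- The step function of a word: the least `t` such that `w` has a subword of
length `l(w) - 2t - 1`. -/
noncomputable def stepFn {A : Type*} (w : FreeMagma A) : ℕ :=
  sInf { t : ℕ | ∃ u : FreeMagma A, IsSubword u w ∧ wlen u + 2 * t + 1 = wlen w }

/-- `w` is a `p`-step word for the generating set `S`. -/
def IsPStepWord (F : Type*) {A : Type*} [Field F] [NonUnitalNonAssocRing A] [Module F A]
    (S : Set A) (w : FreeMagma A) (p : ℕ) : Prop :=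
  HasLeavesIn S w ∧ Irred F S w ∧ KBounded 3 w ∧ stepFn w = p ∧
    ∀ v : FreeMagma A, HasLeavesIn S v → Irred F S v → KBounded 3 v → wlen v = wlen w →
      p ≤ stepFn v

/-- `A` is `k`-round: `x · v = 0` for every product `v` of `k` elements. -/
def IsKRound (A : Type*) [NonUnitalNonAssocRing A] (k : ℕ) : Prop :=
  ∀ (x : A) (w : FreeMagma A), wlen w = k → x * evalA w = 0

/-- `A` is `k`-based. -/
def IsKBased (A : Type*) [NonUnitalNonAssocRing A] (k : ℕ) : Prop :=
  ∀ (x : A) (u v : FreeMagma A), wlen u + wlen v = k →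
    x * (evalA u * evalA v) = evalA u * (x * evalA v) ∧
      (evalA u * evalA v) * x = (evalA u * x) * evalA v

/-- The set `P(x,y,z)`. -/
def Pset {A : Type*} [Mul A] (x y z : A) : Set A :=
  {(x*z)*y, (z*x)*y, (y*z)*x, (z*y)*x, x*(z*y), x*(y*z), y*(x*z), y*(z*x),
    x*y, y*x, x*z, z*x, y*z, z*y, x, y, z}

/-- The set `Q_l(x,y,z)`. -/
def Qlset {A : Type*} [Mul A] (x y z : A) : Set A :=
  {x*(z*y), x*(y*z), y*(x*z), y*(z*x), x*y, y*x, x*z, z*x, y*z, z*y, x, y, z}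

/-- The set `Q_r(x,y,z)`. -/
def Qrset {A : Type*} [Mul A] (x y z : A) : Set A :=
  {(x*z)*y, (z*x)*y, (y*z)*x, (z*y)*x, x*y, y*x, x*z, z*x, y*z, z*y, x, y, z}

/-- `A` is a mixing algebra. -/
def IsMixingAlg (F A : Type*) [Field F] [NonUnitalNonAssocRing A] [Module F A] : Prop :=
  ∀ x y z : A, (x*y)*z ∈ Submodule.span F (Pset x y z) ∧
    z*(x*y) ∈ Submodule.span F (Pset x y z)

/-- `A` is a sliding algebra. -/
def IsSlidingAlg (F A : Type*) [Field F] [NonUnitalNonAssocRing A] [Module F A] : Prop :=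
  (∀ x y z : A, z*(x*y) ∈ Submodule.span F (Qrset x y z)) ∨
  (∀ x y z : A, (x*y)*z ∈ Submodule.span F (Qlset x y z))

/-- A bundled finite-dimensional `k`-round `F`-algebra together with a finite generating
set witnessing `l(A) > c · dim A + b`. -/
structure RoundWitness (F : Type) [Field F] (k : ℕ) (c bb : ℝ) where
  A : Type
  [ring : NonUnitalNonAssocRing A]
  [mod : Module F A]
  [smulComm : SMulCommClass F A A]
  [tower : IsScalarTower F A A]
  finite : FiniteDimensional F A
  round : IsKRound A k
  exceeds : ∃ S : Set A, S.Finite ∧ Generates F S ∧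
    c * (Module.finrank F A : ℝ) + bb < (lenS F S : ℝ)

/-- A bundled finite-dimensional `k`-based `F`-algebra together with a finite generating
set witnessing `l(A) > c · dim A + b`. -/
structure BasedWitness (F : Type) [Field F] (k : ℕ) (c bb : ℝ) where
  A : Type
  [ring : NonUnitalNonAssocRing A]
  [mod : Module F A]
  [smulComm : SMulCommClass F A A]
  [tower : IsScalarTower F A A]
  finite : FiniteDimensional F A
  based : IsKBased A k
  exceeds : ∃ S : Set A, S.Finite ∧ Generates F S ∧
    c * (Module.finrank F A : ℝ) + bb < (lenS F S : ℝ)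


-- basic word lemmas
theorem wlen_of {α : Type*} (a : α) : wlen (FreeMagma.of a) = 1 := rfl
theorem wlen_mul {α : Type*} (u v : FreeMagma α) : wlen (u * v) = wlen u + wlen v := by
  simp [wlen, leafList, List.length_append]
theorem wlen_pos {α : Type*} (w : FreeMagma α) : 1 ≤ wlen w := by
  induction w with
  | ih1 a => simp [wlen_of]
  | ih2 u v ihu ihv => rw [wlen_mul]; omega
theorem evalA_of {A : Type*} [Mul A] (a : A) : evalA (FreeMagma.of a) = a := rfl
theorem evalA_mul {A : Type*} [Mul A] (u v : FreeMagma A) :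
    evalA (u * v) = evalA u * evalA v := rfl
theorem hasLeavesIn_mul {A : Type*} {S : Set A} {u v : FreeMagma A} :
    HasLeavesIn S (u * v) ↔ HasLeavesIn S u ∧ HasLeavesIn S v := by
  simp only [HasLeavesIn]
  constructor
  · intro h
    exact ⟨fun a ha => h a (by simp [leafList, ha]), fun a ha => h a (by simp [leafList, ha])⟩
  · rintro ⟨h1, h2⟩ a ha
    simp only [leafList, List.mem_append] at ha
    rcases ha with h | h
    · exact h1 a h
    · exact h2 a h

/-- shrink a word of length ≥ 2 by one, preserving the value -/
theorem shrink {A : Type*} [Mul A] (w : FreeMagma A) (h : 2 ≤ wlen w) :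
    ∃ w' : FreeMagma A, wlen w' + 1 = wlen w ∧ evalA w' = evalA w := by
  induction w with
  | ih1 a => simp [wlen_of] at h
  | ih2 u v ihu ihv =>
    by_cases hu : 2 ≤ wlen u
    · obtain ⟨u', h1, h2⟩ := ihu hu
      exact ⟨u' * v, by rw [wlen_mul, wlen_mul]; omega, by rw [evalA_mul, evalA_mul, h2]⟩
    · by_cases hv : 2 ≤ wlen v
      · obtain ⟨v', h1, h2⟩ := ihv hv
        exact ⟨u * v', by rw [wlen_mul, wlen_mul]; omega, by rw [evalA_mul, evalA_mul, h2]⟩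
      · have h1 := wlen_pos u; have h2 := wlen_pos v
        exact ⟨FreeMagma.of (evalA (u * v)), by rw [wlen_of, wlen_mul]; omega, rfl⟩

theorem collapse {A : Type*} [Mul A] (w : FreeMagma A) (k : ℕ) (hk : 1 ≤ k) (h : k ≤ wlen w) :
    ∃ w' : FreeMagma A, wlen w' = k ∧ evalA w' = evalA w := by
  obtain ⟨m, hm⟩ : ∃ m, wlen w = k + m := Nat.exists_eq_add_of_le h
  induction m generalizing w with
  | zero => exact ⟨w, by omega, rfl⟩
  | succ m ih =>
    obtain ⟨w', hw1, hw2⟩ := shrink w (by omega)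
    obtain ⟨w'', h1, h2⟩ := ih w' (by omega) (by omega)
    exact ⟨w'', h1, h2.trans hw2⟩

section Alg
variable (F : Type*) {A : Type*} [Field F] [NonUnitalNonAssocRing A] [Module F A]

theorem round_long {k : ℕ} (hk : 2 ≤ k) (hr : IsKRound A k) (x : A) (w : FreeMagma A)
    (h : k ≤ wlen w) : x * evalA w = 0 := by
  obtain ⟨w', h1, h2⟩ := collapse w k (by omega) h
  rw [← h2]; exact hr x w' h1

theorem Lspan_mono {S : Set A} {i j : ℕ} (h : i ≤ j) : Lspan F S i ≤ Lspan F S j :=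
  Submodule.span_mono (fun a ⟨w, hw1, hw2, hw3⟩ => ⟨w, hw1, hw2.trans h, hw3⟩)

theorem evalA_mem_Lspan {S : Set A} {w : FreeMagma A} (hw : HasLeavesIn S w) {i : ℕ}
    (hi : wlen w ≤ i) : evalA w ∈ Lspan F S i :=
  Submodule.subset_span ⟨w, hw, hi, rfl⟩

variable [SMulCommClass F A A] [IsScalarTower F A A]

theorem mul_evalA_mem {S : Set A} {a : A} {i : ℕ} (ha : a ∈ Lspan F S i)
    {v : FreeMagma A} (hv : HasLeavesIn S v) : a * evalA v ∈ Lspan F S (i + wlen v) := by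
  have : a * evalA v = (LinearMap.mulRight F (evalA v)) a := rfl
  rw [this]
  refine Submodule.span_induction (p := fun b _ => (LinearMap.mulRight F (evalA v)) b ∈ Lspan F S (i + wlen v)) ?_ ?_ ?_ ?_ ha
  · rintro b ⟨w, hw1, hw2, rfl⟩
    have : (LinearMap.mulRight F (evalA v)) (evalA w) = evalA (w * v) := rfl
    rw [this]
    exact evalA_mem_Lspan F (hasLeavesIn_mul.mpr ⟨hw1, hv⟩) (by rw [wlen_mul]; omega)
  · simp
  · intro b c _ _ hb hc; rw [map_add]; exact add_mem hb hc
  · intro c b _ hb; rw [map_smul]; exact Submodule.smul_mem _ _ hb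

/-- stabilization lemma -/
theorem stabilize {k : ℕ} (hk : 2 ≤ k) (hr : IsKRound A k) {S : Set A} {t : ℕ}
    (hst : Lspan F S t = Lspan F S (t + (k - 1))) (w : FreeMagma A) (hw : HasLeavesIn S w) :
    evalA w ∈ Lspan F S t := by
  generalize hn : wlen w = n
  induction n using Nat.strong_induction_on generalizing w with
  | _ n ih =>
  by_cases hsmall : n ≤ t + (k - 1)
  · rw [hst]; exact evalA_mem_Lspan F hw (by omega)
  · match w with
    | .of a => simp [wlen_of] at hn; omega
    | .mul u v =>
      have hmm : u.mul v = u * v := rfl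
      rw [hmm] at hw hn ⊢
      rw [wlen_mul] at hn
      rcases hasLeavesIn_mul.mp hw with ⟨hu, hv⟩
      by_cases hb : k ≤ wlen v
      · rw [evalA_mul, round_long hk hr _ v hb]; exact zero_mem _
      · have hvp := wlen_pos v
        have hup := wlen_pos u
        have hac : evalA u ∈ Lspan F S t := by
          refine ih (wlen u) (by omega) u hu rfl
        have := mul_evalA_mem F hac hv
        rw [evalA_mul]
        have hle : Lspan F S (t + wlen v) ≤ Lspan F S t := by
          rw [hst]; exact Lspan_mono F (by omega)
        exact hle this


theorem generates_exists_top {S : Set A} (hg : Generates F S) [FiniteDimensional F A] :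
    ∃ N, Lspan F S N = ⊤ := by
  have hsup : (⊤ : Submodule F A) ≤ ⨆ i : ℕ, Lspan F S i := by
    rw [← hg]
    refine Submodule.span_le.mpr ?_
    rintro a ⟨w, hw, rfl⟩
    refine Submodule.mem_iSup_of_mem (wlen w) ?_
    exact evalA_mem_Lspan F hw le_rfl
  obtain ⟨s, hs⟩ := Module.finite_def.mp ‹FiniteDimensional F A›
  have hdir : Directed (· ≤ ·) (fun i : ℕ => Lspan F S i) :=
    fun i j => ⟨max i j, Lspan_mono F (le_max_left _ _), Lspan_mono F (le_max_right _ _)⟩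
  have hmem : ∀ x ∈ s, ∃ i, x ∈ Lspan F S i := by
    intro x _
    exact (Submodule.mem_iSup_of_directed _ hdir).mp (hsup Submodule.mem_top)
  choose f hf using hmem
  classical
  refine ⟨s.attach.sup (fun x => f x.1 x.2), ?_⟩
  rw [eq_top_iff, ← hs, Submodule.span_le]
  intro x hx
  exact Lspan_mono F (Finset.le_sup (f := fun y : {a // a ∈ s} => f y.1 y.2)
    (Finset.mem_attach _ ⟨x, hx⟩)) (hf x hx)

theorem lenS_le_of_top {S : Set A} {N : ℕ} (h : Lspan F S N = ⊤) : lenS F S ≤ N :=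
  Nat.sInf_le h

theorem Lspan_lenS_eq_top {S : Set A} (hne : ∃ N, Lspan F S N = ⊤) :
    Lspan F S (lenS F S) = ⊤ :=
  Nat.sInf_mem hne

/-- main part-2 bound -/
theorem round_upper_bound {k : ℕ} (hk : 2 ≤ k) [FiniteDimensional F A] (hr : IsKRound A k)
    (S : Set A) (hg : Generates F S) :
    lenS F S ≤ (k - 1) * Module.finrank F A := by
  classical
  set d := Module.finrank F A with hd
  set l := lenS F S with hl
  obtain ⟨N, hN⟩ := generates_exists_top F hg
  have hnotop : ∀ t, t < l → Lspan F S t ≠ ⊤ := by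
    intro t ht hcon
    exact absurd (lenS_le_of_top F hcon) (by omega)
  -- strict growth
  have hstrict : ∀ t, t < l → Lspan F S t < Lspan F S (t + (k - 1)) := by
    intro t ht
    refine lt_of_le_of_ne (Lspan_mono F (by omega)) ?_
    intro heq
    have : Lspan F S t = ⊤ := by
      rw [eq_top_iff, ← hg, Submodule.span_le]
      rintro a ⟨w, hw, rfl⟩
      exact stabilize F hk hr heq w hw
    exact hnotop t ht this
  by_cases hd0 : d = 0
  · -- A is trivial
    have : Subsingleton A := by
      rw [hd] at hd0
      exact Module.finrank_zero_iff.mp hd0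
    have : Lspan F S 0 = ⊤ := Subsingleton.elim _ _
    have := lenS_le_of_top F this
    omega
  · -- growth claim
    have key : ∀ j : ℕ, 1 + j * (k - 1) < l →
        j + 1 ≤ Module.finrank F (Lspan F S (1 + j * (k - 1))) := by
      intro j
      induction j with
      | zero =>
        intro hj
        rw [show 1 + 0 * (k - 1) = 1 by ring, show (0:ℕ) + 1 = 1 by ring]
        by_contra hcon
        push_neg at hcon
        have h0 : Module.finrank F (Lspan F S 1) = 0 := by omega
        have hbot : Lspan F S 1 = ⊥ := by
          have : FiniteDimensional F (Lspan F S 1) := inferInstance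
          exact Submodule.finrank_eq_zero.mp h0
        -- then all of S is zero, so everything is zero
        have hS0 : ∀ a ∈ S, a = (0 : A) := by
          intro a ha
          have : a ∈ Lspan F S 1 :=
            evalA_mem_Lspan F (w := FreeMagma.of a)
              (by intro b hb; simp only [leafList, List.mem_singleton] at hb; rwa [hb]) (by simp [wlen_of])
          rw [hbot] at this
          simpa using this
        have hall : ∀ w : FreeMagma A, HasLeavesIn S w → evalA w = 0 := by
          intro w hw
          induction w with
          | ih1 a => exact hS0 a (hw a (by simp [leafList]))
          | ih2 u v ihu ihv =>
            rcases hasLeavesIn_mul.mp hw with ⟨hu, hv⟩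
            rw [evalA_mul, ihu hu, zero_mul]
        have htop : Lspan F S 0 = ⊤ := by
          rw [eq_top_iff, ← hg, Submodule.span_le]
          rintro a ⟨w, hw, rfl⟩
          rw [hall w hw]
          exact zero_mem _
        have := lenS_le_of_top F htop
        omega
      | succ j ih =>
        intro hj
        have hj' : 1 + j * (k - 1) < l := by
          have : 1 ≤ k - 1 := by omega
          calc 1 + j * (k-1) < 1 + (j+1) * (k-1) := by nlinarith
          _ ≤ l := by omega
        have h1 := ih hj'
        have h2 := hstrict _ hj'
        have := Submodule.finrank_lt_finrank_of_lt h2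
        have harr : 1 + j * (k - 1) + (k - 1) = 1 + (j+1) * (k-1) := by ring
        rw [harr] at this
        omega
    by_contra hcon
    push_neg at hcon
    -- l > (k-1) * d, take j = d - 1
    have hd1 : 1 ≤ d := by omega
    have hik : 1 ≤ k - 1 := by omega
    have hjlt : 1 + (d - 1) * (k - 1) < l := by
      have : 1 + (d-1) * (k-1) ≤ (k-1) * d := by
        have : (d-1) * (k-1) + (k-1) = d * (k-1) := by
          have : d - 1 + 1 = d := by omega
          nlinarith [this]
        nlinarith [Nat.mul_comm d (k-1)]
      omega
    have hkey := key (d - 1) hjlt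
    have hlt : Lspan F S (1 + (d-1) * (k-1)) < ⊤ :=
      lt_top_iff_ne_top.mpr (hnotop _ hjlt)
    have := Submodule.finrank_lt (K := F) hlt.ne
    omega

end Alg
def rule (K a b : ℕ) : Prop := (b = 1 ∧ a + 1 ≤ K) ∨ (b = K ∧ K ∣ a)
instance (K a b : ℕ) : Decidable (rule K a b) := by unfold rule; infer_instance

def Dset (K n : ℕ) : Finset ℕ := Finset.Icc 1 K ∪ (Finset.Icc 2 n).image (· * K)

abbrev Idx (K n : ℕ) := {m : ℕ // m ∈ Dset K n}

def AW (F : Type) (K n : ℕ) : Type := Idx K n → F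

namespace AW
variable {F : Type} [Field F] {K n : ℕ}

instance : AddCommGroup (AW F K n) := inferInstanceAs (AddCommGroup (Idx K n → F))
instance : Module F (AW F K n) := inferInstanceAs (Module F (Idx K n → F))
instance : Inhabited (AW F K n) := ⟨0⟩

def mul (u v : AW F K n) : AW F K n := fun m =>
  ∑ a ∈ (Dset K n).attach, ∑ b ∈ (Dset K n).attach,
    if rule K a.1 b.1 ∧ a.1 + b.1 = m.1 then u a * v b else 0

instance : Mul (AW F K n) := ⟨mul⟩

theorem mul_apply (u v : AW F K n) (m : Idx K n) :
    (u * v) m = ∑ a ∈ (Dset K n).attach, ∑ b ∈ (Dset K n).attach,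
      if rule K a.1 b.1 ∧ a.1 + b.1 = m.1 then u a * v b else 0 := rfl

theorem add_apply (u v : AW F K n) (m : Idx K n) : (u + v) m = u m + v m := rfl
theorem smul_apply (c : F) (u : AW F K n) (m : Idx K n) : (c • u) m = c * u m := rfl
theorem zero_apply (m : Idx K n) : (0 : AW F K n) m = 0 := rfl

instance : NonUnitalNonAssocRing (AW F K n) :=
  { (inferInstanceAs (AddCommGroup (AW F K n)) : AddCommGroup (AW F K n)), (inferInstanceAs (Mul (AW F K n)) : Mul (AW F K n)) with
    left_distrib := by
      intro u v w
      funext m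
      rw [mul_apply, add_apply, mul_apply, mul_apply, ← Finset.sum_add_distrib]
      refine Finset.sum_congr rfl fun a _ => ?_
      rw [← Finset.sum_add_distrib]
      refine Finset.sum_congr rfl fun b _ => ?_
      rw [add_apply]
      split_ifs <;> ring
    right_distrib := by
      intro u v w
      funext m
      rw [mul_apply, add_apply, mul_apply, mul_apply, ← Finset.sum_add_distrib]
      refine Finset.sum_congr rfl fun a _ => ?_
      rw [← Finset.sum_add_distrib]
      refine Finset.sum_congr rfl fun b _ => ?_
      rw [add_apply]
      split_ifs <;> ring
    zero_mul := by
      intro u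
      funext m
      rw [mul_apply, zero_apply]
      refine Finset.sum_eq_zero fun a _ => Finset.sum_eq_zero fun b _ => ?_
      rw [zero_apply]
      split_ifs <;> ring
    mul_zero := by
      intro u
      funext m
      rw [mul_apply, zero_apply]
      refine Finset.sum_eq_zero fun a _ => Finset.sum_eq_zero fun b _ => ?_
      rw [zero_apply]
      split_ifs <;> ring }

instance : SMulCommClass F (AW F K n) (AW F K n) := by
  constructor
  intro c u v
  show c • (u * v) = u * (c • v)
  funext m
  rw [smul_apply, mul_apply, mul_apply, Finset.mul_sum]
  refine Finset.sum_congr rfl fun a _ => ?_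
  rw [Finset.mul_sum]
  refine Finset.sum_congr rfl fun b _ => ?_
  rw [smul_apply]
  split_ifs <;> ring

instance : IsScalarTower F (AW F K n) (AW F K n) := by
  constructor
  intro c u v
  show (c • u) * v = c • (u * v)
  funext m
  rw [smul_apply, mul_apply, mul_apply, Finset.mul_sum]
  refine Finset.sum_congr rfl fun a _ => ?_
  rw [Finset.mul_sum]
  refine Finset.sum_congr rfl fun b _ => ?_
  rw [smul_apply]
  split_ifs <;> ring

instance : FiniteDimensional F (AW F K n) :=
  inferInstanceAs (FiniteDimensional F (Idx K n → F))

noncomputable def g (m : Idx K n) : AW F K n := Pi.single m 1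

theorem g_apply (m j : Idx K n) : g (F := F) m j = if j = m then 1 else 0 := by
  classical
  rw [g, Pi.single_apply]

theorem span_g : Submodule.span F (Set.range (g : Idx K n → AW F K n)) = ⊤ := by
  classical
  have : (Set.range (g : Idx K n → AW F K n)) = Set.range (Pi.basisFun F (Idx K n)) := by
    refine congrArg _ ?_
    funext m
    rw [Pi.basisFun_apply]
    rfl
  rw [this]
  exact (Pi.basisFun F (Idx K n)).span_eq

/-- support bounded below -/
def degGe (j : ℕ) (u : AW F K n) : Prop := ∀ m : Idx K n, m.1 < j → u m = 0

/-- homogeneous of degree p (possibly zero) -/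
def homog (p : ℕ) (u : AW F K n) : Prop := ∀ m : Idx K n, m.1 ≠ p → u m = 0

theorem mem_Dset {m : ℕ} (h : m ∈ Dset K n) :
    (1 ≤ m ∧ m ≤ K) ∨ ∃ i, 2 ≤ i ∧ i ≤ n ∧ m = i * K := by
  rw [Dset, Finset.mem_union, Finset.mem_Icc, Finset.mem_image] at h
  rcases h with h | ⟨i, hi, rfl⟩
  · exact Or.inl h
  · rw [Finset.mem_Icc] at hi
    exact Or.inr ⟨i, hi.1, hi.2, rfl⟩

theorem one_le_of_mem (hK : 1 ≤ K) {m : ℕ} (h : m ∈ Dset K n) : 1 ≤ m := by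
  rcases mem_Dset h with ⟨h1, _⟩ | ⟨i, hi2, _, rfl⟩
  · exact h1
  · nlinarith

theorem degGe_one (hK : 1 ≤ K) (u : AW F K n) : degGe 1 u := by
  intro m hm
  have := one_le_of_mem (n := n) hK m.2
  omega

theorem degGe_mul {p q : ℕ} {u v : AW F K n} (hu : degGe p u) (hv : degGe q v) :
    degGe (p + q) (u * v) := by
  intro m hm
  rw [AW.mul_apply]
  refine Finset.sum_eq_zero fun a _ => Finset.sum_eq_zero fun b _ => ?_
  split_ifs with h
  · obtain ⟨-, hab⟩ := h
    by_cases ha : a.1 < p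
    · rw [hu a ha, zero_mul]
    · rw [hv b (by omega), mul_zero]
  · rfl

theorem homog_mul {p q : ℕ} {u v : AW F K n} (hu : homog p u) (hv : homog q v) :
    homog (p + q) (u * v) := by
  intro m hm
  rw [AW.mul_apply]
  refine Finset.sum_eq_zero fun a _ => Finset.sum_eq_zero fun b _ => ?_
  split_ifs with h
  · obtain ⟨-, hab⟩ := h
    by_cases ha : a.1 = p
    · rw [hv b (by omega), mul_zero]
    · rw [hu a ha, zero_mul]
  · rfl

theorem homog_g (m : Idx K n) : homog m.1 (g (F := F) m) := by
  intro j hj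
  rw [g_apply]
  split_ifs with h
  · exact absurd (congrArg Subtype.val h) hj
  · rfl

/-- left annihilation of high-degree elements -/
theorem mul_high (hK : 1 ≤ K) (x v : AW F K n) (hv : degGe (K + 1) v) : x * v = 0 := by
  funext m
  rw [AW.mul_apply, zero_apply]
  refine Finset.sum_eq_zero fun a _ => Finset.sum_eq_zero fun b _ => ?_
  split_ifs with h
  · obtain ⟨hr, -⟩ := h
    have hb : b.1 ≤ K := by
      rcases hr with ⟨h1, -⟩ | ⟨h1, -⟩ <;> omega
    rw [hv b (by omega), mul_zero]
  · rfl

theorem single_mul_single (a b : Idx K n) (h : rule K a.1 b.1) (hab : a.1 + b.1 ∈ Dset K n) :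
    g (F := F) a * g b = g ⟨a.1 + b.1, hab⟩ := by
  classical
  funext m
  rw [AW.mul_apply, g_apply]
  rw [Finset.sum_eq_single a (fun c _ hc => ?_) (fun hc => absurd (Finset.mem_attach _ a) hc)]
  · rw [Finset.sum_eq_single b (fun c _ hc => ?_) (fun hc => absurd (Finset.mem_attach _ b) hc)]
    · rw [g_apply a a, g_apply b b, if_pos rfl, if_pos rfl]
      have heq : (m = ⟨a.1 + b.1, hab⟩) ↔ (a.1 + b.1 = m.1) := by
        rw [Subtype.ext_iff]
        exact eq_comm
      by_cases h2 : m = ⟨a.1 + b.1, hab⟩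
      · rw [if_pos h2, if_pos ⟨h, heq.mp h2⟩, one_mul]
      · rw [if_neg h2, if_neg (fun hcon => h2 (heq.mpr hcon.2))]
    · rw [g_apply b c, if_neg hc, mul_zero, ite_self]
  · refine Finset.sum_eq_zero fun b' _ => ?_
    rw [g_apply a c, if_neg hc, zero_mul, ite_self]

end AW

namespace AW
variable {F : Type} [Field F] {K n : ℕ}

theorem one_mem (hK : 1 ≤ K) : (1 : ℕ) ∈ Dset K n :=
  Finset.mem_union_left _ (Finset.mem_Icc.mpr ⟨le_refl 1, hK⟩)

theorem low_mem (hK : 1 ≤ K) {m : ℕ} (h1 : 1 ≤ m) (h2 : m ≤ K) : m ∈ Dset K n :=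
  Finset.mem_union_left _ (Finset.mem_Icc.mpr ⟨h1, h2⟩)

theorem multK_mem (hK : 1 ≤ K) {i : ℕ} (h1 : 1 ≤ i) (h2 : i ≤ n) : i * K ∈ Dset K n := by
  rcases eq_or_lt_of_le h1 with h | h
  · rw [← h, one_mul]
    exact low_mem hK hK le_rfl
  · refine Finset.mem_union_right _ (Finset.mem_image.mpr ⟨i, Finset.mem_Icc.mpr ⟨h, h2⟩, rfl⟩)

noncomputable def xe (hK : 1 ≤ K) : AW F K n := g ⟨1, one_mem hK⟩

noncomputable def pw (hK : 1 ≤ K) : ℕ → FreeMagma (AW F K n)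
  | 0 => FreeMagma.of (xe hK)
  | j+1 => pw hK j * FreeMagma.of (xe hK)

noncomputable def ew (hK : 1 ≤ K) : ℕ → FreeMagma (AW F K n)
  | 0 => pw hK (K - 1)
  | i+1 => ew hK i * pw hK (K - 1)

theorem wlen_pw (hK : 1 ≤ K) (j : ℕ) : wlen (pw (F := F) (n := n) hK j) = j + 1 := by
  induction j with
  | zero => rfl
  | succ j ih => rw [pw, wlen_mul, ih, wlen_of]

theorem wlen_ew (hK : 1 ≤ K) (i : ℕ) : wlen (ew (F := F) (n := n) hK i) = (i + 1) * K := by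
  induction i with
  | zero => rw [ew, wlen_pw]; omega
  | succ i ih => rw [ew, wlen_mul, ih, wlen_pw]; have : K - 1 + 1 = K := by omega
                 rw [this]; ring

theorem leaves_pw (hK : 1 ≤ K) (j : ℕ) :
    HasLeavesIn {xe (F := F) (n := n) hK} (pw hK j) := by
  induction j with
  | zero => intro a ha; simp only [pw, leafList, List.mem_singleton] at ha; simp [ha]
  | succ j ih =>
    rw [pw]
    refine hasLeavesIn_mul.mpr ⟨ih, ?_⟩
    intro a ha; simp only [leafList, List.mem_singleton] at ha; simp [ha]

theorem leaves_ew (hK : 1 ≤ K) (i : ℕ) :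
    HasLeavesIn {xe (F := F) (n := n) hK} (ew hK i) := by
  induction i with
  | zero => rw [ew]; exact leaves_pw hK _
  | succ i ih => rw [ew]; exact hasLeavesIn_mul.mpr ⟨ih, leaves_pw hK _⟩

theorem eval_pw (hK : 1 ≤ K) (j : ℕ) (hj : j + 1 ≤ K) (m : Idx K n) (hm : m.1 = j + 1) :
    evalA (pw (F := F) hK j) = g m := by
  induction j generalizing m with
  | zero =>
    have : m = ⟨1, one_mem hK⟩ := Subtype.ext hm
    rw [this, pw]; rfl
  | succ j ih =>
    rw [pw, evalA_mul,
      ih (by omega) ⟨j + 1, low_mem hK (by omega) (by omega)⟩ rfl]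
    rw [show evalA (FreeMagma.of (xe (F := F) (n := n) hK)) = g ⟨1, one_mem hK⟩ from rfl]
    rw [single_mul_single _ _ (Or.inl ⟨rfl, hj⟩)
      (show j + 1 + 1 ∈ Dset K n from low_mem hK (by omega) hj)]
    refine congrArg g (Subtype.ext ?_)
    show j + 1 + 1 = m.1
    omega

theorem eval_ew (hK : 1 ≤ K) (i : ℕ) (hi : i + 1 ≤ n) (m : Idx K n)
    (hm : m.1 = (i + 1) * K) : evalA (ew (F := F) hK i) = g m := by
  induction i generalizing m with
  | zero =>
    rw [ew]
    refine eval_pw hK (K - 1) (by omega) m ?_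
    rw [hm]; omega
  | succ i ih =>
    rw [ew, evalA_mul,
      ih (by omega) ⟨(i + 1) * K, multK_mem hK (by omega) (by omega)⟩ rfl,
      eval_pw hK (K - 1) (by omega) ⟨K, low_mem hK hK le_rfl⟩ (by show K = K - 1 + 1; omega)]
    rw [single_mul_single _ _ (Or.inr ⟨rfl, dvd_mul_left K (i + 1)⟩)
      (show (i + 1) * K + K ∈ Dset K n from by
        rw [show (i + 1) * K + K = (i + 2) * K by ring]
        exact multK_mem hK (by omega) (by omega))]
    refine congrArg g (Subtype.ext ?_)
    show (i + 1) * K + K = m.1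
    rw [hm]
    ring

/-- every basis vector is the value of a word in {x} of length ≤ n*K -/
theorem g_is_word (hK : 1 ≤ K) (hn : 1 ≤ n) (m : Idx K n) :
    ∃ w : FreeMagma (AW F K n), HasLeavesIn {xe (F := F) (n := n) hK} w ∧
      wlen w ≤ n * K ∧ evalA w = g m := by
  have hKnK : K ≤ n * K := Nat.le_mul_of_pos_left K hn
  rcases mem_Dset m.2 with ⟨h1, h2⟩ | ⟨i, hi2, hin, hm⟩
  · refine ⟨pw hK (m.1 - 1), leaves_pw hK _, ?_, ?_⟩
    · rw [wlen_pw]; omega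
    · exact eval_pw hK _ (by omega) m (by omega)
  · refine ⟨ew hK (i - 1), leaves_ew hK _, ?_, ?_⟩
    · rw [wlen_ew, show i - 1 + 1 = i by omega]
      exact Nat.mul_le_mul_right _ hin
    · refine eval_ew hK _ (by omega) m ?_
      rw [show i - 1 + 1 = i by omega]
      exact hm

theorem generates_xe (hK : 1 ≤ K) (hn : 1 ≤ n) :
    Generates F ({xe (F := F) (n := n) hK} : Set (AW F K n)) := by
  rw [Generates, eq_top_iff, ← span_g (F := F) (K := K) (n := n)]
  refine Submodule.span_le.mpr ?_
  rintro a ⟨m, rfl⟩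
  obtain ⟨w, hw1, hw2, hw3⟩ := g_is_word (F := F) hK hn m
  exact Submodule.subset_span ⟨w, hw1, hw3⟩

theorem Lspan_top_xe (hK : 1 ≤ K) (hn : 1 ≤ n) :
    Lspan F ({xe (F := F) (n := n) hK} : Set (AW F K n)) (n * K) = ⊤ := by
  rw [eq_top_iff, ← span_g (F := F) (K := K) (n := n)]
  refine Submodule.span_le.mpr ?_
  rintro a ⟨m, rfl⟩
  obtain ⟨w, hw1, hw2, hw3⟩ := g_is_word (F := F) hK hn m
  exact Submodule.subset_span ⟨w, hw1, hw2, hw3⟩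

theorem evalA_homog_word (hK : 1 ≤ K) (w : FreeMagma (AW F K n))
    (hw : HasLeavesIn {xe (F := F) (n := n) hK} w) : homog (wlen w) (evalA w) := by
  induction w with
  | ih1 a =>
    have : a = xe hK := hw a (by simp [leafList])
    rw [wlen_of, evalA_of, this]
    exact homog_g ⟨1, one_mem hK⟩
  | ih2 u v ihu ihv =>
    rcases hasLeavesIn_mul.mp hw with ⟨hu, hv⟩
    rw [wlen_mul, evalA_mul]
    exact homog_mul (ihu hu) (ihv hv)

def TrSub (m : ℕ) : Submodule F (AW F K n) where
  carrier := {u | ∀ p : Idx K n, m < p.1 → u p = 0}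
  add_mem' := by
    intro u v hu hv p hp
    rw [add_apply, hu p hp, hv p hp, add_zero]
  zero_mem' := fun p _ => rfl
  smul_mem' := by
    intro c u hu p hp
    rw [smul_apply, hu p hp, mul_zero]

theorem Lspan_le_TrSub (hK : 1 ≤ K) (m : ℕ) :
    Lspan F ({xe (F := F) (n := n) hK} : Set (AW F K n)) m ≤ TrSub m := by
  refine Submodule.span_le.mpr ?_
  rintro a ⟨w, hw1, hw2, rfl⟩
  intro p hp
  exact evalA_homog_word hK w hw1 p (by omega)

theorem lenS_ge (hK : 1 ≤ K) (hn : 1 ≤ n) :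
    n * K ≤ lenS F ({xe (F := F) (n := n) hK} : Set (AW F K n)) := by
  have hne : ∃ N, Lspan F ({xe (F := F) (n := n) hK} : Set (AW F K n)) N = ⊤ :=
    ⟨n * K, Lspan_top_xe hK hn⟩
  have htop : Lspan F ({xe (F := F) (n := n) hK} : Set (AW F K n))
      (lenS F ({xe (F := F) (n := n) hK} : Set (AW F K n))) = ⊤ := Nat.sInf_mem hne
  by_contra hcon
  push_neg at hcon
  set l := lenS F ({xe (F := F) (n := n) hK} : Set (AW F K n)) with hl
  have hmem : (n * K : ℕ) ∈ Dset K n := multK_mem hK hn le_rfl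
  have : g (F := F) ⟨n * K, hmem⟩ ∈ TrSub (K := K) (n := n) l :=
    Lspan_le_TrSub hK l (htop ▸ Submodule.mem_top)
  have := this ⟨n * K, hmem⟩ hcon
  rw [g_apply, if_pos rfl] at this
  exact one_ne_zero this

theorem card_Dset (hK : 1 ≤ K) (hn : 1 ≤ n) : (Dset K n).card = n + K - 1 := by
  rw [Dset, Finset.card_union_of_disjoint]
  · rw [Nat.card_Icc, Finset.card_image_of_injective _ (fun a b hab =>
      Nat.eq_of_mul_eq_mul_right hK hab), Nat.card_Icc]
    omega
  · rw [Finset.disjoint_left]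
    rintro m hm1 hm2
    rw [Finset.mem_Icc] at hm1
    obtain ⟨i, hi, rfl⟩ := Finset.mem_image.mp hm2
    rw [Finset.mem_Icc] at hi
    nlinarith

theorem finrank_AW (hK : 1 ≤ K) (hn : 1 ≤ n) :
    Module.finrank F (AW F K n) = n + K - 1 := by
  have h1 : Module.finrank F (AW F K n) = Fintype.card (Idx K n) :=
    Module.finrank_pi F
  rw [h1, Fintype.card_coe, card_Dset hK hn]

theorem round_AW (hK : 1 ≤ K) : IsKRound (AW F K n) (K + 1) := by
  intro x w hw
  refine mul_high hK x _ ?_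
  have : ∀ w : FreeMagma (AW F K n), degGe (wlen w) (evalA w) := by
    intro w
    induction w with
    | ih1 a => rw [wlen_of, evalA_of]; exact degGe_one hK a
    | ih2 u v ihu ihv => rw [wlen_mul, evalA_mul]; exact degGe_mul ihu ihv
  rw [← hw]
  exact this w

end AW


/- STATEMENT 9 -/
theorem stmt9 (F : Type) [Field F] (k : ℕ) (hk : 2 ≤ k) :
    (∀ c bb : ℝ, c < (k : ℝ) - 1 → Nonempty (RoundWitness F k c bb)) ∧
    (∀ (A : Type) [NonUnitalNonAssocRing A] [Module F A]
        [SMulCommClass F A A] [IsScalarTower F A A],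
      FiniteDimensional F A → IsKRound A k →
        ∀ S : Set A, S.Finite → Generates F S →
          lenS F S ≤ (k - 1) * Module.finrank F A) := by
  constructor
  · intro c bb hc
    set K := k - 1 with hKdef
    have hK : 1 ≤ K := by omega
    have hKcast : ((K : ℕ) : ℝ) = (k : ℝ) - 1 := by
      rw [hKdef, Nat.cast_sub (by omega : 1 ≤ k), Nat.cast_one]
    have hcK : c < (K : ℝ) := by rw [hKcast]; exact hc
    obtain ⟨n0, hn0⟩ := exists_nat_gt ((c * ((K : ℝ) - 1) + bb) / ((K : ℝ) - c))
    set n := max n0 1 with hndef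
    have hn : 1 ≤ n := le_max_right _ _
    have hnR : ((c * ((K : ℝ) - 1) + bb) / ((K : ℝ) - c)) < (n : ℝ) := by
      refine lt_of_lt_of_le hn0 ?_
      exact_mod_cast Nat.cast_le.mpr (le_max_left n0 1)
    have h2 : c * ((K : ℝ) - 1) + bb < (n : ℝ) * ((K : ℝ) - c) :=
      (div_lt_iff₀ (by linarith)).mp hnR
    have hbig : c * ((n : ℝ) + (K : ℝ) - 1) + bb < (n : ℝ) * (K : ℝ) := by nlinarith
    have hround : IsKRound (AW F K n) k := by
      have := AW.round_AW (F := F) (K := K) (n := n) hK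
      rwa [show K + 1 = k by omega] at this
    refine ⟨{ A := AW F K n, finite := inferInstance, round := hround, exceeds := ?_ }⟩
    refine ⟨{AW.xe hK}, Set.finite_singleton _, AW.generates_xe hK hn, ?_⟩
    rw [AW.finrank_AW hK hn]
    have hle : ((n * K : ℕ) : ℝ) ≤ (lenS F ({AW.xe (F := F) (n := n) hK} : Set (AW F K n)) : ℝ) :=
      Nat.cast_le.mpr (AW.lenS_ge hK hn)
    have hcast : ((n + K - 1 : ℕ) : ℝ) = (n : ℝ) + (K : ℝ) - 1 := by
      rw [Nat.cast_sub (by omega : 1 ≤ n + K), Nat.cast_add, Nat.cast_one]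
    rw [hcast]
    push_cast at hle
    linarith
  · intro A _ _ _ _ hfin hround S _ hgen
    have : FiniteDimensional F A := hfin
    exact round_upper_bound F hk hround S hgen

end P
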